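/- Let R be a field complete with respect to a non-Archimedean absolute value, and let R{t,u} be the ring of power series Σ_{m,n≥0} c_{mn} t^m u^n with |c_{mn}| r^{m+n} → 0 for every r > 0. The substitution t ↦ t, u ↦ t^{-1} induces an isomorphism of R-algebras R{t,u}/(tu-1) ≅ A_R(𝔾_m). -/

import Mathlib

open Filter Topology

noncomputable section

/-- Coefficient condition defining `R{t,u}`: `‖c_{mn}‖ r^{m+n} → 0` for every `r > 0`. -/
def T2OK {R : Type*} [NormedField R] (c : ℕ × ℕ → R) : Prop :=
  ∀ r : ℝ, 0 < r →
    Tendsto (fun mn : ℕ × ℕ => ‖c mn‖ * r ^ (mn.1 + mn.2)) (cocompact (ℕ × ℕ)) (𝓝 0)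

/-- Multiplication of two-variable power series on coefficients. -/
def mul2 {R : Type*} [CommRing R] (c d : ℕ × ℕ → R) : ℕ × ℕ → R := fun mn =>
  ∑ i ∈ Finset.range (mn.1 + 1), ∑ j ∈ Finset.range (mn.2 + 1),
    c (i, j) * d (mn.1 - i, mn.2 - j)

/-- Condition defining `A_R(𝔾_m)`. -/
def GmOK {R : Type*} [NormedField R] (c : ℤ → R) : Prop :=
  ∀ r : ℝ, 0 < r → Tendsto (fun n : ℤ => ‖c n‖ * r ^ |n|) (cocompact ℤ) (𝓝 0)

/-- Multiplication of Laurent series on coefficients. -/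
def lmul {R : Type*} [NormedField R] (c d : ℤ → R) : ℤ → R :=
  fun n => ∑' u : ℤ, c u * d (n - u)

/-- The substitution map `t ↦ t`, `u ↦ t⁻¹` on coefficients: the coefficient of `t^d`
in `f(t, t⁻¹)` is `∑_{m - n = d} c_{mn}`. -/
def toGm {R : Type*} [NormedField R] (c : ℕ × ℕ → R) : ℤ → R := fun d =>
  ∑' mn : ℕ × ℕ, if (mn.1 : ℤ) - (mn.2 : ℤ) = d then c mn else 0

/-- The coefficients of `t·u - 1 ∈ R{t,u}`. -/
def tuSubOne (R : Type*) [CommRing R] : ℕ × ℕ → R := fun p =>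
  if p = (1, 1) then 1 else if p = (0, 0) then -1 else 0

namespace QIG

variable {R : Type*} [NormedField R]

lemma tendsto_w {α : Type*} (w : α → ℕ) (hw : ∀ N, {x | w x ≤ N}.Finite) {ρ : ℝ}
    (h0 : 0 ≤ ρ) (h1 : ρ < 1) : Tendsto (fun x => ρ ^ w x) cofinite (𝓝 0) := by
  refine (tendsto_pow_atTop_nhds_zero_of_lt_one h0 h1).comp ?_
  rw [tendsto_atTop]
  intro b
  refine eventually_cofinite.2 ((hw b).subset fun x hx => ?_)
  simp only [Set.mem_setOf_eq] at hx ⊢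
  omega

lemma tendsto_cw {α : Type*} (C : ℝ) (w : α → ℕ) (hw : ∀ N, {x | w x ≤ N}.Finite) :
    Tendsto (fun x => C * (2⁻¹ : ℝ) ^ w x) cofinite (𝓝 0) := by
  simpa using (tendsto_w w hw (ρ := 2⁻¹) (by norm_num) (by norm_num)).const_mul C

lemma w2_finite (N : ℕ) : {x : ℕ × ℕ | x.1 + x.2 ≤ N}.Finite := by
  refine (Finset.finite_toSet ((Finset.range (N+1)) ×ˢ (Finset.range (N+1)))).subset ?_
  intro x hx
  simp only [Set.mem_setOf_eq] at hx
  simp only [Finset.coe_product, Set.mem_prod, Finset.mem_coe, Finset.mem_range]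
  omega

lemma w4_finite (N : ℕ) :
    {x : (ℕ × ℕ) × (ℕ × ℕ) | x.1.1 + x.1.2 + (x.2.1 + x.2.2) ≤ N}.Finite := by
  have : {x : (ℕ × ℕ) × (ℕ × ℕ) | x.1.1 + x.1.2 + (x.2.1 + x.2.2) ≤ N} ⊆
      {y : ℕ × ℕ | y.1 + y.2 ≤ N} ×ˢ {y : ℕ × ℕ | y.1 + y.2 ≤ N} := by
    intro x hx
    simp only [Set.mem_setOf_eq] at hx
    exact ⟨by simp only [Set.mem_setOf_eq]; omega, by simp only [Set.mem_setOf_eq]; omega⟩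
  exact ((w2_finite N).prod (w2_finite N)).subset this

lemma wZ_finite (N : ℕ) : {x : ℤ | x.natAbs ≤ N}.Finite := by
  refine (Set.finite_Icc (-(N:ℤ)) N).subset fun x hx => ?_
  simp only [Set.mem_setOf_eq] at hx
  simp only [Set.mem_Icc]
  omega

lemma exists_bound {α : Type*} {f : α → ℝ} (hf : Tendsto f cofinite (𝓝 0))
    (h0 : ∀ x, 0 ≤ f x) : ∃ C : ℝ, 0 ≤ C ∧ ∀ x, f x ≤ C := by
  have h1 : {x | f x < 1}ᶜ.Finite := mem_cofinite.mp (hf (Iio_mem_nhds one_pos))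
  have hs : (0:ℝ) ≤ ∑ x ∈ h1.toFinset, f x := Finset.sum_nonneg fun i _ => h0 i
  refine ⟨1 + ∑ x ∈ h1.toFinset, f x, by linarith, fun x => ?_⟩
  by_cases hx : f x < 1
  · linarith
  · have hx' : x ∈ h1.toFinset := by simpa using hx
    have := Finset.single_le_sum (f := f) (fun i _ => h0 i) hx'
    linarith

/-- bound from T2OK -/
lemma t2Bound {c : ℕ × ℕ → R} (hc : T2OK c) {r : ℝ} (hr : 0 < r) :
    ∃ C : ℝ, 0 ≤ C ∧ ∀ mn : ℕ × ℕ, ‖c mn‖ * r ^ (mn.1 + mn.2) ≤ C := by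
  have h := hc r hr
  rw [cocompact_eq_cofinite] at h
  exact exists_bound h fun mn => by positivity

lemma gmBound {e : ℤ → R} (he : GmOK e) {r : ℝ} (hr : 0 < r) :
    ∃ C : ℝ, 0 ≤ C ∧ ∀ n : ℤ, ‖e n‖ * r ^ n.natAbs ≤ C := by
  have h := he r hr
  rw [cocompact_eq_cofinite] at h
  obtain ⟨C, hC0, hC⟩ := exists_bound h fun n => by positivity
  refine ⟨C, hC0, fun n => ?_⟩
  have := hC n
  rwa [Int.abs_eq_natAbs, zpow_natCast] at this

/-- geometric bound at ratio 1/2 -/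
lemma t2Half {c : ℕ × ℕ → R} (hc : T2OK c) :
    ∃ C : ℝ, 0 ≤ C ∧ ∀ mn : ℕ × ℕ, ‖c mn‖ ≤ C * (2⁻¹ : ℝ) ^ (mn.1 + mn.2) := by
  obtain ⟨C, hC0, hC⟩ := t2Bound hc two_pos
  refine ⟨C, hC0, fun mn => ?_⟩
  have h2 : (0:ℝ) < 2 ^ (mn.1 + mn.2) := by positivity
  rw [inv_pow, ← div_eq_mul_inv, le_div_iff₀ h2]
  exact hC mn

lemma T2OK_of_forall_bound {c : ℕ × ℕ → R}
    (h : ∀ r : ℝ, 0 < r → ∃ C : ℝ, 0 ≤ C ∧ ∀ mn : ℕ × ℕ, ‖c mn‖ * r ^ (mn.1 + mn.2) ≤ C) :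
    T2OK c := by
  intro r hr
  rw [cocompact_eq_cofinite]
  obtain ⟨C, hC0, hC⟩ := h (2 * r) (by linarith)
  refine squeeze_zero (fun mn => by positivity)
    (g := fun mn : ℕ × ℕ => C * (2⁻¹ : ℝ) ^ (mn.1 + mn.2)) (fun mn => ?_)
    (tendsto_cw C _ w2_finite)
  have key : ((2:ℝ) * r) ^ (mn.1 + mn.2) * (2⁻¹ : ℝ) ^ (mn.1 + mn.2) = r ^ (mn.1 + mn.2) := by
    rw [← mul_pow]
    congr 1
    ring
  calc ‖c mn‖ * r ^ (mn.1 + mn.2)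
      = ‖c mn‖ * ((2 * r) ^ (mn.1 + mn.2) * (2⁻¹ : ℝ) ^ (mn.1 + mn.2)) := by rw [key]
    _ = (‖c mn‖ * (2 * r) ^ (mn.1 + mn.2)) * (2⁻¹ : ℝ) ^ (mn.1 + mn.2) := by ring
    _ ≤ C * (2⁻¹ : ℝ) ^ (mn.1 + mn.2) :=
        mul_le_mul_of_nonneg_right (hC mn) (by positivity)

lemma GmOK_of_forall_bound {e : ℤ → R}
    (h : ∀ r : ℝ, 0 < r → ∃ C : ℝ, 0 ≤ C ∧ ∀ n : ℤ, ‖e n‖ * r ^ n.natAbs ≤ C) :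
    GmOK e := by
  intro r hr
  rw [cocompact_eq_cofinite]
  obtain ⟨C, hC0, hC⟩ := h (2 * r) (by linarith)
  have habs : ∀ n : ℤ, r ^ |n| = r ^ n.natAbs := fun n => by
    rw [Int.abs_eq_natAbs, zpow_natCast]
  refine squeeze_zero (fun n => by rw [habs]; positivity)
    (g := fun n : ℤ => C * (2⁻¹ : ℝ) ^ n.natAbs) (fun n => ?_)
    (tendsto_cw C _ wZ_finite)
  rw [habs]
  have key : ((2:ℝ) * r) ^ n.natAbs * (2⁻¹ : ℝ) ^ n.natAbs = r ^ n.natAbs := by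
    rw [← mul_pow]
    congr 1
    ring
  calc ‖e n‖ * r ^ n.natAbs
      = (‖e n‖ * (2 * r) ^ n.natAbs) * (2⁻¹ : ℝ) ^ n.natAbs := by rw [← key]; ring
    _ ≤ C * (2⁻¹ : ℝ) ^ n.natAbs := mul_le_mul_of_nonneg_right (hC n) (by positivity)

def diag (k : ℤ) (j : ℕ) : ℕ × ℕ := (j + k.toNat, j + (-k).toNat)

lemma diag_injective (k : ℤ) : Function.Injective (diag k) := by
  intro a b h
  simp only [diag, Prod.mk.injEq] at h
  omega

lemma diag_cond (k : ℤ) (j : ℕ) : ((diag k j).1 : ℤ) - (diag k j).2 = k := by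
  simp only [diag]
  push_cast
  omega

lemma diag_sum (k : ℤ) (j : ℕ) : (diag k j).1 + (diag k j).2 = 2 * j + k.natAbs := by
  simp only [diag]
  omega

lemma diag_surj {k : ℤ} {mn : ℕ × ℕ} (h : (mn.1 : ℤ) - mn.2 = k) :
    mn = diag k (min mn.1 mn.2) := by
  obtain ⟨m, n⟩ := mn
  simp only [diag, Prod.mk.injEq]
  constructor <;> omega

lemma toGm_eq (c : ℕ × ℕ → R) (k : ℤ) : toGm c k = ∑' j : ℕ, c (diag k j) := by
  have h : Function.support (fun mn : ℕ × ℕ => if (mn.1 : ℤ) - mn.2 = k then c mn else 0)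
      ⊆ Set.range (diag k) := by
    intro mn hmn
    have hcond : (mn.1 : ℤ) - mn.2 = k := by
      by_contra hco
      simp only [Function.mem_support, if_neg hco, ne_eq, not_true_eq_false] at hmn
    exact ⟨min mn.1 mn.2, (diag_surj hcond).symm⟩
  rw [toGm, ← (diag_injective k).tsum_eq h]
  exact tsum_congr fun j => if_pos (diag_cond k j)

variable [CompleteSpace R]

lemma summable_aux [IsUltrametricDist R] {α : Type*} {f : α → R} {g : α → ℝ}
    (h : ∀ x, ‖f x‖ ≤ g x) (hg : Tendsto g cofinite (𝓝 0)) : Summable f :=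
  NonarchimedeanAddGroup.summable_of_tendsto_cofinite_zero
    (tendsto_zero_iff_norm_tendsto_zero.2 (squeeze_zero (fun _ => norm_nonneg _) h hg))

lemma summable_diag [IsUltrametricDist R] {c : ℕ × ℕ → R} (hc : T2OK c) (k : ℤ) :
    Summable fun j : ℕ => c (diag k j) := by
  obtain ⟨C, hC0, hC⟩ := t2Half hc
  refine summable_aux (g := fun j => C * (2⁻¹ : ℝ) ^ (2 * j + k.natAbs)) (fun j => ?_) ?_
  · have := hC (diag k j)
    rwa [diag_sum] at this
  · exact tendsto_cw C _ fun N => (Set.finite_Iic N).subset fun j hj => by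
      simp only [Set.mem_setOf_eq] at hj
      simp only [Set.mem_Iic]
      omega

lemma summable_shift [IsUltrametricDist R] {c : ℕ × ℕ → R} (hc : T2OK c) (m n : ℕ) :
    Summable fun j : ℕ => c (m + j, n + j) := by
  obtain ⟨C, hC0, hC⟩ := t2Half hc
  refine summable_aux (g := fun j => C * (2⁻¹ : ℝ) ^ (m + j + (n + j))) (fun j => hC _) ?_
  exact tendsto_cw C _ fun N => (Set.finite_Iic N).subset fun j hj => by
    simp only [Set.mem_setOf_eq] at hj
    simp only [Set.mem_Iic]
    omega

/-- Part 1 -/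
lemma part1 [IsUltrametricDist R] (c : ℕ × ℕ → R) (hc : T2OK c) : GmOK (toGm c) := by
  apply GmOK_of_forall_bound
  intro r hr
  have hM : (0:ℝ) < 2 * max r 1 := by
    have : (0:ℝ) < max r 1 := lt_max_of_lt_right one_pos
    linarith
  have hrM : r ≤ 2 * max r 1 := by
    have h1 : r ≤ max r 1 := le_max_left r 1
    have h2 : (0:ℝ) ≤ max r 1 := le_of_lt (lt_max_of_lt_right one_pos)
    linarith
  have h1M : (1:ℝ) ≤ 2 * max r 1 := by
    have : (1:ℝ) ≤ max r 1 := le_max_right r 1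
    linarith
  obtain ⟨C, hC0, hC⟩ := t2Bound hc hM
  refine ⟨C, hC0, fun n => ?_⟩
  rw [toGm_eq]
  have hrp : (0:ℝ) < r ^ n.natAbs := by positivity
  rw [← le_div_iff₀ hrp]
  refine IsUltrametricDist.norm_tsum_le_of_forall_le_of_nonneg (by positivity) fun j => ?_
  rw [le_div_iff₀ hrp]
  have h1 : ‖c (diag n j)‖ * r ^ n.natAbs ≤ ‖c (diag n j)‖ * (2 * max r 1) ^ n.natAbs :=
    mul_le_mul_of_nonneg_left (pow_le_pow_left₀ hr.le hrM _) (norm_nonneg _)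
  have h2 : ‖c (diag n j)‖ * (2 * max r 1) ^ n.natAbs
      ≤ ‖c (diag n j)‖ * (2 * max r 1) ^ ((diag n j).1 + (diag n j).2) := by
    refine mul_le_mul_of_nonneg_left (pow_le_pow_right₀ h1M ?_) (norm_nonneg _)
    rw [diag_sum]
    omega
  exact h1.trans (h2.trans (hC _))

/-- Part 2 -/
lemma part2 [IsUltrametricDist R] (c d : ℕ × ℕ → R) (hc : T2OK c) (hd : T2OK d) :
    toGm (c + d) = toGm c + toGm d := by
  funext k
  simp only [toGm_eq, Pi.add_apply]
  exact Summable.tsum_add (summable_diag hc k) (summable_diag hd k)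

/-- Part 4 -/
lemma part4 : toGm (fun p : ℕ × ℕ => if p = (0,0) then (1:R) else 0)
    = fun n : ℤ => if n = 0 then (1:R) else 0 := by
  funext k
  rw [toGm_eq]
  rcases eq_or_ne k 0 with rfl | hk
  · rw [tsum_eq_single 0 (fun j hj => ?_)]
    · simp [diag]
    · have : diag 0 j ≠ (0, 0) := by
        simp only [diag, ne_eq, Prod.mk.injEq]
        omega
      exact if_neg this
  · have hz : ∀ j : ℕ, (if diag k j = (0,0) then (1:R) else 0) = 0 := by
      intro j
      have : diag k j ≠ (0, 0) := fun h => hk (by simpa [h] using (diag_cond k j).symm)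
      exact if_neg this
    rw [tsum_congr hz, tsum_zero, if_neg hk]

/-- Part 5 -/
lemma part5 (e : ℤ → R) (he : GmOK e) : ∃ c : ℕ × ℕ → R, T2OK c ∧ toGm c = e := by
  refine ⟨fun mn => if mn.2 = 0 then e mn.1 else if mn.1 = 0 then e (-(mn.2:ℤ)) else 0,
    ?_, ?_⟩
  · apply T2OK_of_forall_bound
    intro r hr
    obtain ⟨C, hC0, hC⟩ := gmBound he hr
    refine ⟨C, hC0, fun mn => ?_⟩
    obtain ⟨m, n⟩ := mn
    rcases eq_or_ne n 0 with rfl | hn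
    · simpa using (by simpa using hC (m : ℤ))
    · rcases eq_or_ne m 0 with rfl | hm
      · have := hC (-(n:ℤ))
        simp only [Int.natAbs_neg, Int.natAbs_natCast] at this
        simpa [hn] using this
      · simp [hn, hm, hC0]
  · funext k
    rw [toGm_eq]
    rw [tsum_eq_single 0 (fun j hj => ?_)]
    · rcases le_or_gt 0 k with hk | hk
      · have h1 : ((-k).toNat : ℤ) = 0 := by omega
        simp only [diag, zero_add]
        rw [if_pos (by omega)]
        congr 1
        omega
      · simp only [diag, zero_add]
        rw [if_neg (by omega), if_pos (by omega)]
        congr 1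
        omega
    · simp only [diag]
      simp only [show j + (-k).toNat ≠ 0 by omega, show j + k.toNat ≠ 0 by omega, ↓reduceIte]



def fc (c : ℕ × ℕ → R) (u : ℤ) : ℕ × ℕ → R := fun p => if (p.1 : ℤ) - p.2 = u then c p else 0

lemma toGm_eq_fc (c : ℕ × ℕ → R) (u : ℤ) : toGm c u = ∑' p, fc c u p := rfl

lemma norm_fc_le (c : ℕ × ℕ → R) (u : ℤ) (p : ℕ × ℕ) : ‖fc c u p‖ ≤ ‖c p‖ := by
  rw [fc]
  split_ifs
  · exact le_refl _
  · simp

def Fm (c d : ℕ × ℕ → R) (k : ℤ) : (ℕ × ℕ) × (ℕ × ℕ) → R := fun pq =>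
  if ((pq.1.1 : ℤ) + pq.2.1) - ((pq.1.2 : ℤ) + pq.2.2) = k then c pq.1 * d pq.2 else 0

def Gm2 (c d : ℕ × ℕ → R) (k : ℤ) : (ℕ × ℕ) × (ℕ × ℕ) → R := fun sp =>
  if sp.2.1 ≤ sp.1.1 ∧ sp.2.2 ≤ sp.1.2 ∧ (sp.1.1 : ℤ) - sp.1.2 = k then
    c sp.2 * d (sp.1.1 - sp.2.1, sp.1.2 - sp.2.2) else 0

def Hm (c d : ℕ × ℕ → R) (k : ℤ) : ℤ × ((ℕ × ℕ) × (ℕ × ℕ)) → R := fun x =>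
  if ((x.2.1.1 : ℤ) - x.2.1.2 = x.1) ∧
      (((x.2.1.1 : ℤ) + x.2.2.1) - ((x.2.1.2 : ℤ) + x.2.2.2) = k)
    then c x.2.1 * d x.2.2 else 0

def jG : (ℕ × ℕ) × (ℕ × ℕ) → (ℕ × ℕ) × (ℕ × ℕ) := fun pq =>
  ((pq.1.1 + pq.2.1, pq.1.2 + pq.2.2), pq.1)

def jH : (ℕ × ℕ) × (ℕ × ℕ) → ℤ × ((ℕ × ℕ) × (ℕ × ℕ)) := fun pq =>
  ((pq.1.1 : ℤ) - pq.1.2, pq)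

variable [CompleteSpace R]

lemma part3 [IsUltrametricDist R] (c d : ℕ × ℕ → R) (hc : T2OK c) (hd : T2OK d) :
    toGm (mul2 c d) = lmul (toGm c) (toGm d) := by
  obtain ⟨C, hC0, hC⟩ := t2Half hc
  obtain ⟨D, hD0, hD⟩ := t2Half hd
  funext k
  have hbF : ∀ pq : (ℕ × ℕ) × (ℕ × ℕ), ‖c pq.1‖ * ‖d pq.2‖
      ≤ C * D * (2⁻¹ : ℝ) ^ (pq.1.1 + pq.1.2 + (pq.2.1 + pq.2.2)) := by
    intro pq
    calc ‖c pq.1‖ * ‖d pq.2‖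
        ≤ (C * (2⁻¹ : ℝ) ^ (pq.1.1 + pq.1.2)) * (D * (2⁻¹ : ℝ) ^ (pq.2.1 + pq.2.2)) :=
          mul_le_mul (hC _) (hD _) (norm_nonneg _) (by positivity)
      _ = C * D * (2⁻¹ : ℝ) ^ (pq.1.1 + pq.1.2 + (pq.2.1 + pq.2.2)) := by
          rw [pow_add]; ring
  have hF : Summable (Fm c d k) := by
    refine summable_aux
      (g := fun pq : (ℕ × ℕ) × (ℕ × ℕ) =>
        C * D * (2⁻¹ : ℝ) ^ (pq.1.1 + pq.1.2 + (pq.2.1 + pq.2.2)))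
      (fun pq => ?_) (tendsto_cw _ _ w4_finite)
    simp only [Fm]
    split_ifs
    · exact (norm_mul_le _ _).trans (hbF pq)
    · rw [norm_zero]; positivity
  have hsfc : ∀ u : ℤ, Summable (fc c u) := fun u =>
    summable_aux (fun p => (norm_fc_le c u p).trans (hC p)) (tendsto_cw C _ w2_finite)
  have hsfd : ∀ v : ℤ, Summable (fc d v) := fun v =>
    summable_aux (fun p => (norm_fc_le d v p).trans (hD p)) (tendsto_cw D _ w2_finite)
  have hprod : ∀ u v : ℤ,
      Summable (fun pq : (ℕ × ℕ) × (ℕ × ℕ) => fc c u pq.1 * fc d v pq.2) := by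
    intro u v
    refine summable_aux
      (g := fun pq : (ℕ × ℕ) × (ℕ × ℕ) =>
        C * D * (2⁻¹ : ℝ) ^ (pq.1.1 + pq.1.2 + (pq.2.1 + pq.2.2)))
      (fun pq => ?_) (tendsto_cw _ _ w4_finite)
    calc ‖fc c u pq.1 * fc d v pq.2‖ ≤ ‖fc c u pq.1‖ * ‖fc d v pq.2‖ := norm_mul_le _ _
      _ ≤ ‖c pq.1‖ * ‖d pq.2‖ :=
          mul_le_mul (norm_fc_le c u pq.1) (norm_fc_le d v pq.2) (norm_nonneg _) (norm_nonneg _)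
      _ ≤ _ := hbF pq
  have hpt : ∀ (u : ℤ) (pq : (ℕ × ℕ) × (ℕ × ℕ)),
      fc c u pq.1 * fc d (k - u) pq.2 = Hm c d k (u, pq) := by
    intro u pq
    simp only [fc, Hm]
    by_cases h1 : (pq.1.1 : ℤ) - pq.1.2 = u
    · by_cases h2 : (pq.2.1 : ℤ) - pq.2.2 = k - u
      · rw [if_pos h1, if_pos h2, if_pos ⟨h1, by omega⟩]
      · rw [if_pos h1, if_neg h2, mul_zero, if_neg (fun hh => h2 (by omega))]
    · rw [if_neg h1, zero_mul, if_neg (fun hh => h1 hh.1)]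
  -- claim C
  have hinjH : Function.Injective jH := by
    intro a b h
    exact congrArg Prod.snd h
  have hH0 : ∀ x ∉ Set.range jH, Hm c d k x = 0 := by
    intro x hx
    by_contra h
    apply hx
    refine ⟨x.2, ?_⟩
    by_cases hcond : ((x.2.1.1 : ℤ) - x.2.1.2 = x.1) ∧
        (((x.2.1.1 : ℤ) + x.2.2.1) - ((x.2.1.2 : ℤ) + x.2.2.2) = k)
    · exact Prod.ext hcond.1 rfl
    · rw [Hm, if_neg hcond] at h
      exact absurd rfl h
  have hcompH : ∀ pq, Hm c d k (jH pq) = Fm c d k pq := by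
    intro pq
    simp only [Hm, Fm, jH]
    simp only [true_and]
  have hH : Summable (Hm c d k) := by
    refine (hinjH.summable_iff hH0).mp ?_
    have : (Hm c d k) ∘ jH = Fm c d k := funext hcompH
    rw [this]
    exact hF
  have hfibH : ∀ u : ℤ, Summable (fun pq => Hm c d k (u, pq)) := by
    intro u
    have := hprod u (k - u)
    rwa [funext (hpt u)] at this
  have step1 : ∀ u : ℤ, toGm c u * toGm d (k - u) = ∑' pq, Hm c d k (u, pq) := by
    intro u
    rw [toGm_eq_fc c u, toGm_eq_fc d (k - u),
      Summable.tsum_mul_tsum (hsfc u) (hsfd (k - u)) (hprod u (k - u))]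
    exact tsum_congr (hpt u)
  have claimC : lmul (toGm c) (toGm d) k = ∑' pq, Fm c d k pq := by
    calc lmul (toGm c) (toGm d) k = ∑' u : ℤ, toGm c u * toGm d (k - u) := rfl
      _ = ∑' u : ℤ, ∑' pq, Hm c d k (u, pq) := tsum_congr step1
      _ = ∑' x, Hm c d k x := (Summable.tsum_prod' hH hfibH).symm
      _ = ∑' pq, Fm c d k pq := by
          rw [← hinjH.tsum_eq (Function.support_subset_iff'.mpr hH0)]
          exact tsum_congr hcompH
  -- claim B
  have hGF : ∀ pq, Gm2 c d k (jG pq) = Fm c d k pq := by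
    intro pq
    simp only [Gm2, Fm, jG]
    have e : (pq.1.1 + pq.2.1 - pq.1.1, pq.1.2 + pq.2.2 - pq.1.2) = pq.2 := by
      refine Prod.ext ?_ ?_ <;> simp
    rw [e]
    refine if_congr ?_ rfl rfl
    constructor
    · rintro ⟨_, _, h⟩
      push_cast at h ⊢
      omega
    · intro h
      refine ⟨Nat.le_add_right _ _, Nat.le_add_right _ _, ?_⟩
      push_cast
      omega
  have hinjG : Function.Injective (jG) := by
    intro a b h
    simp only [jG, Prod.mk.injEq] at h
    obtain ⟨⟨h1, h2⟩, h3⟩ := h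
    have e1 : a.1.1 = b.1.1 := congrArg Prod.fst h3
    have e2 : a.1.2 = b.1.2 := congrArg Prod.snd h3
    exact Prod.ext h3 (Prod.ext (by omega) (by omega))
  have hG0 : ∀ x ∉ Set.range jG, Gm2 c d k x = 0 := by
    intro x hx
    by_contra h
    apply hx
    by_cases hcond : x.2.1 ≤ x.1.1 ∧ x.2.2 ≤ x.1.2 ∧ (x.1.1 : ℤ) - x.1.2 = k
    · refine ⟨(x.2, (x.1.1 - x.2.1, x.1.2 - x.2.2)), ?_⟩
      simp only [jG]
      refine Prod.ext (Prod.ext ?_ ?_) rfl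
      · simp only
        omega
      · simp only
        omega
    · rw [Gm2, if_neg hcond] at h
      exact absurd rfl h
  have hG : Summable (Gm2 c d k) := by
    refine (hinjG.summable_iff hG0).mp ?_
    have : (Gm2 c d k) ∘ jG = Fm c d k := funext hGF
    rw [this]
    exact hF
  have hGfib : ∀ s : ℕ × ℕ, ∀ p ∉ (Finset.range (s.1+1) ×ˢ Finset.range (s.2+1)),
      Gm2 c d k (s, p) = 0 := by
    intro s p hp
    simp only [Finset.mem_product, Finset.mem_range] at hp
    simp only [Gm2]
    rw [if_neg]
    rintro ⟨hh1, hh2, -⟩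
    refine hp ⟨?_, ?_⟩ <;> [skip; skip] <;>
      [exact Nat.lt_succ_of_le hh1; exact Nat.lt_succ_of_le hh2]
  have hfibG : ∀ s : ℕ × ℕ, Summable (fun p => Gm2 c d k (s, p)) := fun s =>
    summable_of_ne_finset_zero (hGfib s)
  have hBfc : ∀ s : ℕ × ℕ, fc (mul2 c d) k s = ∑' p, Gm2 c d k (s, p) := by
    intro s
    rw [tsum_eq_sum (hGfib s)]
    by_cases hs : (s.1 : ℤ) - s.2 = k
    · rw [fc, if_pos hs, mul2, ← Finset.sum_product']
      refine Finset.sum_congr rfl fun p hp => ?_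
      simp only [Finset.mem_product, Finset.mem_range] at hp
      simp only [Gm2]
      rw [if_pos ⟨by omega, by omega, hs⟩]
    · rw [fc, if_neg hs]
      refine (Finset.sum_eq_zero fun p hp => ?_).symm
      rw [Gm2, if_neg]
      rintro ⟨-, -, hh⟩
      exact hs hh
  have claimB : toGm (mul2 c d) k = ∑' pq, Fm c d k pq := by
    calc toGm (mul2 c d) k = ∑' s, fc (mul2 c d) k s := rfl
      _ = ∑' s, ∑' p, Gm2 c d k (s, p) := tsum_congr hBfc
      _ = ∑' x, Gm2 c d k x := (Summable.tsum_prod' hG hfibG).symm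
      _ = ∑' pq, Fm c d k pq := by
          rw [← hinjG.tsum_eq (Function.support_subset_iff'.mpr hG0)]
          exact tsum_congr hGF
  rw [claimB, claimC]



lemma t2_tuSubOne : T2OK (tuSubOne R) := by
  intro r hr
  rw [cocompact_eq_cofinite]
  have hev : (fun _ : ℕ × ℕ => (0:ℝ)) =ᶠ[cofinite]
      fun mn : ℕ × ℕ => ‖tuSubOne R mn‖ * r ^ (mn.1 + mn.2) := by
    refine eventually_cofinite.2
      (((Set.finite_singleton ((1:ℕ), (1:ℕ))).insert ((0:ℕ), (0:ℕ))).subset ?_)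
    intro mn hmn
    simp only [Set.mem_setOf_eq] at hmn
    by_contra hmem
    simp only [Set.mem_insert_iff, Set.mem_singleton_iff] at hmem
    push_neg at hmem
    have hz : tuSubOne R mn = 0 := by
      rw [tuSubOne, if_neg hmem.2, if_neg hmem.1]
    rw [hz, norm_zero, zero_mul] at hmn
    exact hmn rfl
  exact Tendsto.congr' hev tendsto_const_nhds

lemma toGm_tuSubOne : toGm (tuSubOne R) = 0 := by
  funext k
  have hsup : ∀ mn ∉ ({((0:ℕ), (0:ℕ)), ((1:ℕ), (1:ℕ))} : Finset (ℕ × ℕ)),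
      (if (mn.1 : ℤ) - mn.2 = k then tuSubOne R mn else 0) = 0 := by
    intro mn hmn
    simp only [Finset.mem_insert, Finset.mem_singleton] at hmn
    push_neg at hmn
    have hz : tuSubOne R mn = 0 := by rw [tuSubOne, if_neg hmn.2, if_neg hmn.1]
    simp [hz]
  show (∑' mn : ℕ × ℕ, if (mn.1 : ℤ) - (mn.2 : ℤ) = k then tuSubOne R mn else 0) = (0 : ℤ → R) k
  rw [tsum_eq_sum hsup, Finset.sum_insert (by simp), Finset.sum_singleton]
  rcases eq_or_ne k 0 with rfl | hk
  · simp [tuSubOne]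
  · simp [tuSubOne, Ne.symm hk]

lemma mul2_tuSubOne_eq (e : ℕ × ℕ → R) (mn : ℕ × ℕ) :
    mul2 (tuSubOne R) e mn
      = (if 1 ≤ mn.1 ∧ 1 ≤ mn.2 then e (mn.1 - 1, mn.2 - 1) else 0) - e mn := by
  obtain ⟨m, n⟩ := mn
  rw [mul2, ← Finset.sum_product']
  by_cases h : 1 ≤ m ∧ 1 ≤ n
  · have hsub : ({((0:ℕ), (0:ℕ)), ((1:ℕ), (1:ℕ))} : Finset (ℕ × ℕ))
        ⊆ Finset.range (m+1) ×ˢ Finset.range (n+1) := by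
      intro p hp
      simp only [Finset.mem_insert, Finset.mem_singleton] at hp
      rcases hp with rfl | rfl <;>
        simp only [Finset.mem_product, Finset.mem_range] <;> omega
    have hzero : ∀ p ∈ Finset.range (m+1) ×ˢ Finset.range (n+1),
        p ∉ ({((0:ℕ), (0:ℕ)), ((1:ℕ), (1:ℕ))} : Finset (ℕ × ℕ)) →
        tuSubOne R p * e (m - p.1, n - p.2) = 0 := by
      intro p _ hnp
      simp only [Finset.mem_insert, Finset.mem_singleton] at hnp
      push_neg at hnp
      rw [tuSubOne, if_neg hnp.2, if_neg hnp.1, zero_mul]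
    rw [← Finset.sum_subset hsub hzero, Finset.sum_insert (by simp), Finset.sum_singleton]
    rw [if_pos h]
    simp only [tuSubOne]
    norm_num
    ring
  · have hsub : ({((0:ℕ), (0:ℕ))} : Finset (ℕ × ℕ))
        ⊆ Finset.range (m+1) ×ˢ Finset.range (n+1) := by
      intro p hp
      simp only [Finset.mem_singleton] at hp
      subst hp
      simp only [Finset.mem_product, Finset.mem_range]
      omega
    have hzero : ∀ p ∈ Finset.range (m+1) ×ˢ Finset.range (n+1),
        p ∉ ({((0:ℕ), (0:ℕ))} : Finset (ℕ × ℕ)) →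
        tuSubOne R p * e (m - p.1, n - p.2) = 0 := by
      intro p hp hnp
      simp only [Finset.mem_singleton] at hnp
      have h11 : p ≠ (1, 1) := by
        rintro rfl
        simp only [Finset.mem_product, Finset.mem_range] at hp
        exact h ⟨by omega, by omega⟩
      rw [tuSubOne, if_neg h11, if_neg hnp, zero_mul]
    rw [← Finset.sum_subset hsub hzero, Finset.sum_singleton, if_neg h]
    simp only [tuSubOne]
    norm_num

variable [CompleteSpace R]

def dInv (c : ℕ × ℕ → R) : ℕ × ℕ → R := fun mn =>
  -∑ j ∈ Finset.range (min mn.1 mn.2 + 1), c (mn.1 - j, mn.2 - j)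

lemma dInv_tail [IsUltrametricDist R] {c : ℕ × ℕ → R} (hc : T2OK c) (h0 : toGm c = 0)
    (mn : ℕ × ℕ) : dInv c mn = ∑' j : ℕ, c (mn.1 + 1 + j, mn.2 + 1 + j) := by
  obtain ⟨m, n⟩ := mn
  set k : ℤ := (m : ℤ) - n with hk
  set L : ℕ := min m n with hL
  have hsum := Summable.sum_add_tsum_nat_add (f := fun j => c (diag k j)) (L + 1) (summable_diag hc k)
  have hzero : (∑' j : ℕ, c (diag k j)) = 0 := by
    rw [← toGm_eq, h0]
    rfl
  rw [hzero] at hsum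
  have hfin : ∑ j ∈ Finset.range (L + 1), c (diag k j)
      = ∑ j ∈ Finset.range (L + 1), c (m - j, n - j) := by
    have hrefl := Finset.sum_range_reflect (fun i => c (m - i, n - i)) (L + 1)
    rw [← hrefl]
    refine Finset.sum_congr rfl fun j hj => ?_
    simp only [Finset.mem_range] at hj
    congr 1
    simp only [diag, Prod.mk.injEq]
    constructor <;> omega
  have hdiag2 : ∀ j : ℕ, diag k (j + (L + 1)) = (m + 1 + j, n + 1 + j) := by
    intro j
    simp only [diag, Prod.mk.injEq]
    constructor <;> omega
  have hsum' : ∑ i ∈ Finset.range (L + 1), c (diag k i)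
      + ∑' i : ℕ, c (diag k (i + (L + 1))) = 0 := hsum
  have hd : dInv c (m, n) = ∑' j : ℕ, c (diag k (j + (L + 1))) := by
    have h1 : ∑ j ∈ Finset.range (L + 1), c (m - j, n - j)
        + ∑' i : ℕ, c (diag k (i + (L + 1))) = 0 := by
      rw [← hfin]
      exact hsum'
    have h2 : dInv c (m, n) = -∑ j ∈ Finset.range (L + 1), c (m - j, n - j) := by
      simp only [dInv, ← hL]
    rw [h2]
    exact neg_eq_of_add_eq_zero_right h1
  rw [hd]
  exact tsum_congr fun j => by rw [hdiag2 j]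

lemma part6fwd [IsUltrametricDist R] (c : ℕ × ℕ → R) (hc : T2OK c) (h0 : toGm c = 0) :
    ∃ d : ℕ × ℕ → R, T2OK d ∧ c = mul2 (tuSubOne R) d := by
  refine ⟨dInv c, ?_, ?_⟩
  · apply T2OK_of_forall_bound
    intro r hr
    set M : ℝ := 2 * max r 1 with hM
    have hM0 : (0:ℝ) < M := by
      have : (0:ℝ) < max r 1 := lt_max_of_lt_right one_pos
      rw [hM]; linarith
    have hrM : r ≤ M := by
      have h1 : r ≤ max r 1 := le_max_left r 1
      have h2 : (0:ℝ) ≤ max r 1 := le_of_lt (lt_max_of_lt_right one_pos)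
      rw [hM]; linarith
    have h1M : (1:ℝ) ≤ M := by
      have : (1:ℝ) ≤ max r 1 := le_max_right r 1
      rw [hM]; linarith
    obtain ⟨C, hC0, hC⟩ := t2Bound hc hM0
    refine ⟨C, hC0, fun mn => ?_⟩
    rw [dInv_tail hc h0 mn]
    have hMp : (0:ℝ) < M ^ (mn.1 + mn.2) := by positivity
    have hb : ‖∑' j : ℕ, c (mn.1 + 1 + j, mn.2 + 1 + j)‖ ≤ C / M ^ (mn.1 + mn.2) := by
      refine IsUltrametricDist.norm_tsum_le_of_forall_le_of_nonneg (by positivity) fun j => ?_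
      rw [le_div_iff₀ hMp]
      calc ‖c (mn.1 + 1 + j, mn.2 + 1 + j)‖ * M ^ (mn.1 + mn.2)
          ≤ ‖c (mn.1 + 1 + j, mn.2 + 1 + j)‖ * M ^ ((mn.1 + 1 + j) + (mn.2 + 1 + j)) :=
            mul_le_mul_of_nonneg_left (pow_le_pow_right₀ h1M (by omega)) (norm_nonneg _)
        _ ≤ C := hC _
    calc ‖∑' j : ℕ, c (mn.1 + 1 + j, mn.2 + 1 + j)‖ * r ^ (mn.1 + mn.2)
        ≤ (C / M ^ (mn.1 + mn.2)) * M ^ (mn.1 + mn.2) :=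
          mul_le_mul hb (pow_le_pow_left₀ hr.le hrM _) (by positivity) (by positivity)
      _ = C := div_mul_cancel₀ C (ne_of_gt hMp)
  · funext mn
    rw [mul2_tuSubOne_eq]
    by_cases h : 1 ≤ mn.1 ∧ 1 ≤ mn.2
    · rw [if_pos h]
      have e1 : dInv c (mn.1 - 1, mn.2 - 1) = ∑' j : ℕ, c (mn.1 + j, mn.2 + j) := by
        rw [dInv_tail hc h0]
        exact tsum_congr fun j => by
          congr 1
          exact Prod.ext (by simp; omega) (by simp; omega)
      have e2 : (∑' j : ℕ, c (mn.1 + j, mn.2 + j))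
          = c mn + ∑' j : ℕ, c (mn.1 + (j + 1), mn.2 + (j + 1)) := by
        rw [Summable.tsum_eq_zero_add (summable_shift hc mn.1 mn.2)]
        simp
      have e3 : dInv c mn = ∑' j : ℕ, c (mn.1 + (j + 1), mn.2 + (j + 1)) := by
        rw [dInv_tail hc h0]
        exact tsum_congr fun j => by
          congr 1
          exact Prod.ext (by simp; omega) (by simp; omega)
      rw [e1, e2, e3]
      ring
    · rw [if_neg h]
      have hmin : min mn.1 mn.2 = 0 := by omega
      have : dInv c mn = -c mn := by
        simp only [dInv, hmin]
        simp
      rw [this]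
      ring


end QIG

/-- For a complete non-Archimedean valued field `R`, the substitution `t ↦ t`, `u ↦ t⁻¹`
induces an isomorphism of `R`-algebras `R{t,u}/(tu - 1) ≅ A_R(𝔾_m)`: the substitution map
is well defined on `R{t,u}`, is a ring morphism, is surjective onto `A_R(𝔾_m)`, and its
kernel is the principal ideal generated by `tu - 1`. -/
theorem quotient_iso_Gm {R : Type*} [NormedField R] [CompleteSpace R]
    (hna : IsNonarchimedean (norm : R → ℝ)) :
    (∀ c : ℕ × ℕ → R, T2OK c → GmOK (toGm c)) ∧
    (∀ c d : ℕ × ℕ → R, T2OK c → T2OK d → toGm (c + d) = toGm c + toGm d) ∧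
    (∀ c d : ℕ × ℕ → R, T2OK c → T2OK d → toGm (mul2 c d) = lmul (toGm c) (toGm d)) ∧
    (toGm (fun p : ℕ × ℕ => if p = (0,0) then (1:R) else 0) =
      fun n : ℤ => if n = 0 then (1:R) else 0) ∧
    (∀ e : ℤ → R, GmOK e → ∃ c : ℕ × ℕ → R, T2OK c ∧ toGm c = e) ∧
    (∀ c : ℕ × ℕ → R, T2OK c →
      (toGm c = 0 ↔ ∃ d : ℕ × ℕ → R, T2OK d ∧ c = mul2 (tuSubOne R) d)) := by
  haveI : IsUltrametricDist R :=
    IsUltrametricDist.isUltrametricDist_of_isNonarchimedean_norm hna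
  refine ⟨QIG.part1, QIG.part2, QIG.part3, QIG.part4, QIG.part5,
    fun c hc => ⟨QIG.part6fwd c hc, ?_⟩⟩
  rintro ⟨d, hd, rfl⟩
  rw [QIG.part3 _ _ QIG.t2_tuSubOne hd, QIG.toGm_tuSubOne]
  funext n
  simp [lmul]
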